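/- arXiv:2212.03643 — 2 statements merged into one kernel-verified Lean document; each statement's English description precedes it below -/
import Mathlib

section
/- Let V be a self-dual finite-dimensional module for a semisimple algebraic group G with maximal torus T, with highest weight λ, and fix a simple root α_i with maximum α_i-level e = e_i(λ). For 0 ≤ j ≤ e let V^j be the sum of weight spaces V_μ over weights μ of α_i-level j. Then for all 0 ≤ j ≤ ⌊e/2⌋, V^{e−j} is isomorphic to the dual (V^j)* as a module for the derived subgroup of the Levi L_i. -/
open Module

/-- The weight space of a character `χ : T →* kˣ` of a subgroup `T ≤ G` in a
representation `ρ` of `G`. -/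
def wSpace {k G V : Type*} [Field k] [Group G] [AddCommGroup V] [Module k V]
    (ρ : Representation k G V) (T : Subgroup G) (χ : ↥T →* kˣ) : Submodule k V where
  carrier := {v | ∀ t : T, ρ (t : G) v = (χ t : k) • v}
  add_mem' := by
    intro a b ha hb t
    simp [map_add, ha t, hb t, smul_add]
  zero_mem' := by intro t; simp
  smul_mem' := by
    intro c v hv t
    simp only [map_smul, hv t]
    rw [smul_comm]

/-- `V^j`: the sum of the weight spaces of `V` whose weight `λ − Σ c_r α_r` has
`α_i`-level `c_i = j`. -/
def levelSpace {k G V : Type*} [Field k] [Group G] [AddCommGroup V] [Module k V]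
    (ρ : Representation k G V) (T : Subgroup G) {ℓ : ℕ}
    (lam : ↥T →* kˣ) (α : Fin ℓ → (↥T →* kˣ)) (i : Fin ℓ) (j : ℕ) : Submodule k V :=
  ⨆ (c : Fin ℓ → ℕ) (_ : c i = j), wSpace ρ T (lam * (∏ r, (α r) ^ (c r))⁻¹)

/-- Let `V` be a self-dual finite-dimensional module of highest weight
`λ` for a semisimple group `G` with maximal torus `T`, fix a simple root `α_i`, and let
`e = e_i(λ)` be the maximum `α_i`-level of weights of `V` (attained at the lowest weight
`w₀(λ) = −λ`).  Let `V^j` be the sum of weight spaces of `α_i`-level `j`, each `V^j`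
being stable under the subgroup `H = [L_i, L_i]`.  Then for all `0 ≤ j ≤ ⌊e/2⌋`, the
module `V^{e−j}` is isomorphic to the dual `(V^j)*` as an `H`-module. -/
theorem stmt8 {k : Type*} [Field k] [IsAlgClosed k]
    {G : Type*} [Group G] {V : Type*} [AddCommGroup V] [Module k V] [FiniteDimensional k V]
    (ρ : Representation k G V) (T H : Subgroup G)
    (ℓ : ℕ) (lam : ↥T →* kˣ) (α : Fin ℓ → (↥T →* kˣ))
    (hαindep : ∀ a b : Fin ℓ → ℤ, (∏ r, (α r) ^ (a r)) = (∏ r, (α r) ^ (b r)) → a = b)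
    (i : Fin ℓ) (e : ℕ)
    (hdecomp : (⨆ c : Fin ℓ → ℕ, wSpace ρ T (lam * (∏ r, (α r) ^ (c r))⁻¹)) = ⊤)
    (hmax : ∀ c : Fin ℓ → ℕ, wSpace ρ T (lam * (∏ r, (α r) ^ (c r))⁻¹) ≠ ⊥ → c i ≤ e)
    (hlow : ∃ cmax : Fin ℓ → ℕ, cmax i = e ∧
      lam * (∏ r, (α r) ^ (cmax r))⁻¹ = lam⁻¹ ∧
      wSpace ρ T (lam * (∏ r, (α r) ^ (cmax r))⁻¹) ≠ ⊥)
    (B : LinearMap.BilinForm k V) (hB : B.Nondegenerate)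
    (hGinv : ∀ (g : G) (v w : V), B (ρ g v) (ρ g w) = B v w)
    (hHstab : ∀ g ∈ H, ∀ (j : ℕ), ∀ v ∈ levelSpace ρ T lam α i j,
      ρ g v ∈ levelSpace ρ T lam α i j) :
    ∀ j : ℕ, j ≤ e / 2 →
      ∃ φ : ↥(levelSpace ρ T lam α i (e - j)) ≃ₗ[k]
          Module.Dual k ↥(levelSpace ρ T lam α i j),
        ∀ (g : ↥H) (v : ↥(levelSpace ρ T lam α i (e - j)))
          (w : ↥(levelSpace ρ T lam α i j))
          (hv : ρ (g : G) (v : V) ∈ levelSpace ρ T lam α i (e - j))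
          (hw : ρ (g : G) (w : V) ∈ levelSpace ρ T lam α i j),
          φ ⟨ρ (g : G) (v : V), hv⟩ ⟨ρ (g : G) (w : V), hw⟩ = φ v w := by
  classical
  intro j hj
  obtain ⟨cmax, hcmaxi, hcmaxeq, -⟩ := hlow
  have hje : j ≤ e := le_trans hj (Nat.div_le_self e 2)
  set W := fun j' => levelSpace ρ T lam α i j' with hWdef
  -- lam^2 = ∏ α^cmax
  have hlam2 : lam * lam = ∏ r, (α r) ^ (cmax r) := by
    ext t
    have h := DFunLike.congr_fun hcmaxeq t
    simp only [MonoidHom.mul_apply, MonoidHom.inv_apply] at h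
    have h2 : lam t * lam t = (∏ r, (α r) ^ (cmax r)) t := by
      have h3 := congrArg (fun x => lam t * x * ((∏ r, (α r) ^ (cmax r)) t)) h
      simpa [mul_assoc] using h3
    exact congrArg Units.val (by simpa [MonoidHom.mul_apply] using h2)
  -- orthogonality of weight spaces with χ * χ' ≠ 1
  have orth : ∀ χ χ' : ↥T →* kˣ, χ * χ' ≠ 1 →
      ∀ v ∈ wSpace ρ T χ, ∀ w ∈ wSpace ρ T χ', B v w = 0 := by
    intro χ χ' hne v hv w hw
    obtain ⟨t, ht⟩ : ∃ t : ↥T, χ t * χ' t ≠ 1 := by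
      by_contra h
      push_neg at h
      exact hne (MonoidHom.ext fun t => by simpa using h t)
    have h1 : B v w = ((χ t : k) * (χ' t : k)) * B v w := by
      conv_lhs => rw [← hGinv (t : G) v w, hv t, hw t]
      simp [smul_smul, mul_comm, mul_assoc, mul_left_comm]
    have h2 : ((χ t : k) * (χ' t : k)) ≠ 1 := by
      intro h
      exact ht (Units.ext (by simpa using h))
    have h3 : (1 - (χ t : k) * (χ' t : k)) * B v w = 0 := by linear_combination h1
    rcases mul_eq_zero.mp h3 with h4 | h4
    · exact absurd (sub_eq_zero.mp h4).symm h2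
    · exact h4
  -- characters of levels not summing to e multiply nontrivially
  have key : ∀ c c' : Fin ℓ → ℕ, c i + c' i ≠ e →
      (lam * (∏ r, (α r) ^ (c r))⁻¹) * (lam * (∏ r, (α r) ^ (c' r))⁻¹) ≠ 1 := by
    intro c c' hne h1
    apply hne
    have h2 : (∏ r, (α r) ^ (c r)) * (∏ r, (α r) ^ (c' r)) = lam * lam := by
      ext t
      have h := DFunLike.congr_fun h1 t
      simp only [MonoidHom.mul_apply, MonoidHom.inv_apply, MonoidHom.one_apply] at h
      rw [mul_mul_mul_comm, ← mul_inv, mul_inv_eq_one] at h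
      have h2 : (∏ r, (α r) ^ (c r)) t * (∏ r, (α r) ^ (c' r)) t = lam t * lam t := h.symm
      exact congrArg Units.val (by simpa [MonoidHom.mul_apply] using h2)
    have hprod : (∏ r, (α r) ^ (c r)) * (∏ r, (α r) ^ (c' r)) = ∏ r, (α r) ^ (c r + c' r) := by
      rw [← Finset.prod_mul_distrib]
      exact Finset.prod_congr rfl fun r _ => (pow_add (α r) (c r) (c' r)).symm
    have hz : ∏ r, (α r) ^ ((fun r => (c r + c' r : ℤ)) r) =
        ∏ r, (α r) ^ ((fun r => (cmax r : ℤ)) r) := by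
      simp only [← Nat.cast_add, fun r (n : ℕ) => (zpow_natCast (α r) n : (α r) ^ (n : ℤ) = (α r) ^ n)]
      rw [← hprod, h2, hlam2]
    have hcc := congrFun (hαindep _ _ hz) i
    omega
  -- orthogonality between level spaces
  have lorth : ∀ j1 j2 : ℕ, j1 + j2 ≠ e → ∀ v ∈ W j1, ∀ w ∈ W j2, B v w = 0 := by
    intro j1 j2 hne v hv w hw
    have h1 : ∀ c : Fin ℓ → ℕ, c i = j1 →
        ∀ x ∈ wSpace ρ T (lam * (∏ r, (α r) ^ (c r))⁻¹), B x w = 0 := by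
      intro c hc x hx
      have h2 : W j2 ≤ LinearMap.ker (B x) := by
        refine iSup_le fun c' => iSup_le fun hc' => fun y hy => ?_
        have := orth _ _ (key c c' (by omega)) x hx y hy
        simpa [LinearMap.mem_ker] using this
      simpa [LinearMap.mem_ker] using h2 hw
    have h3 : W j1 ≤ LinearMap.ker (B.flip w) := by
      refine iSup_le fun c => iSup_le fun hc => fun x hx => ?_
      simpa [LinearMap.mem_ker] using h1 c hc x hx
    simpa [LinearMap.mem_ker] using h3 hv
  -- the level spaces span V
  have htop : (⨆ j' : ℕ, W j') = ⊤ := by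
    rw [eq_top_iff, ← hdecomp]
    refine iSup_le fun c => ?_
    refine le_trans ?_ (le_iSup W (c i))
    exact le_iSup₂ (f := fun (c' : Fin ℓ → ℕ) (_ : c' i = c i) =>
      wSpace ρ T (lam * (∏ r, (α r) ^ (c' r))⁻¹)) c rfl
  -- the pairing
  let f : ↥(W (e - j)) →ₗ[k] Module.Dual k ↥(W j) :=
    B.compl₁₂ (W (e - j)).subtype (W j).subtype
  have hinjf : Function.Injective f := by
    rw [← LinearMap.ker_eq_bot, LinearMap.ker_eq_bot']
    intro v hv0
    have hv0' : ∀ w ∈ W j, B (v : V) w = 0 := by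
      intro w hw
      have := LinearMap.congr_fun hv0 ⟨w, hw⟩
      simpa [f, LinearMap.compl₁₂_apply] using this
    have hall : ∀ w : V, B (v : V) w = 0 := by
      intro w
      have hwtop : w ∈ ⨆ j', W j' := htop ▸ Submodule.mem_top
      have hle : (⨆ j', W j') ≤ LinearMap.ker (B (v : V)) := by
        refine iSup_le fun j' => fun y hy => ?_
        rcases eq_or_ne j' j with rfl | hne
        · simpa [LinearMap.mem_ker] using hv0' y hy
        · have hne2 : (e - j) + j' ≠ e := by omega
          simpa [LinearMap.mem_ker] using lorth (e - j) j' hne2 v.1 v.2 y hy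
      simpa [LinearMap.mem_ker] using hle hwtop
    exact Subtype.ext (hB.1 _ hall)
  let g : ↥(W j) →ₗ[k] Module.Dual k ↥(W (e - j)) :=
    B.flip.compl₁₂ (W j).subtype (W (e - j)).subtype
  have hinjg : Function.Injective g := by
    rw [← LinearMap.ker_eq_bot, LinearMap.ker_eq_bot']
    intro w hw0
    have hw0' : ∀ v ∈ W (e - j), B v (w : V) = 0 := by
      intro v hv
      have := LinearMap.congr_fun hw0 ⟨v, hv⟩
      simpa [g, LinearMap.compl₁₂_apply] using this
    have hall : ∀ v : V, B v (w : V) = 0 := by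
      intro v
      have hvtop : v ∈ ⨆ j', W j' := htop ▸ Submodule.mem_top
      have hle : (⨆ j', W j') ≤ LinearMap.ker (B.flip (w : V)) := by
        refine iSup_le fun j' => fun y hy => ?_
        rcases eq_or_ne j' (e - j) with rfl | hne
        · simpa [LinearMap.mem_ker] using hw0' y hy
        · have hne2 : j' + j ≠ e := by omega
          simpa [LinearMap.mem_ker] using lorth j' j hne2 y hy w.1 w.2
      simpa [LinearMap.mem_ker] using hle hvtop
    exact Subtype.ext (hB.2 _ hall)
  have hd1 : finrank k ↥(W (e - j)) ≤ finrank k ↥(W j) := by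
    have := LinearMap.finrank_le_finrank_of_injective hinjf
    simpa [Subspace.dual_finrank_eq] using this
  have hd2 : finrank k ↥(W j) ≤ finrank k ↥(W (e - j)) := by
    have := LinearMap.finrank_le_finrank_of_injective hinjg
    simpa [Subspace.dual_finrank_eq] using this
  have hd : finrank k ↥(W (e - j)) = finrank k (Module.Dual k ↥(W j)) := by
    rw [Subspace.dual_finrank_eq]
    omega
  refine ⟨f.linearEquivOfInjective hinjf hd, ?_⟩
  intro g' v w hv hw
  simp only [LinearMap.linearEquivOfInjective_apply, f, LinearMap.compl₁₂_apply,
    Submodule.coe_subtype]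
  exact hGinv (g' : G) (v : V) (w : V)
end

section
/- Let s = diag(μ₁·I_{n₁},…,μ_m·I_{n_m}, μ_m^{-1}·I_{n_m},…,μ₁^{-1}·I_{n₁}) be a noncentral element of Sp_{2ℓ}(k) (ℓ ≥ 2, k algebraically closed, char k ≠ 2) with μ_i ≠ μ_j^{±1} for i < j and Σ n_i = ℓ. Then every eigenspace of s on the symmetric square Sym²(k^{2ℓ}) (the irreducible module L(2ω₁) for Sp_{2ℓ} when char k ≠ 2) has dimension at most 2ℓ² − 3ℓ + 4, and equality for an eigenvalue μ with μ = μ^{-1} forces (up to conjugation and for ℓ ≥ 3) s = ±diag(1,…,1,−1,−1,1,…,1) with eigenvalue 1. -/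
open TensorProduct

/-- The symmetric square of `W`, realised (for `char k ≠ 2`) as the submodule of `W ⊗ W`
spanned by the squares `x ⊗ x`. -/
noncomputable def symSq (k W : Type*) [Field k] [AddCommGroup W] [Module k W] :
    Submodule k (W ⊗[k] W) :=
  Submodule.span k {z | ∃ x : W, z = x ⊗ₜ[k] x}

section Helpers

theorem amgmNat (x y : ℕ) : 2 * (x * y) ≤ x * x + y * y := by
  rcases le_total x y with h | h
  · obtain ⟨c, rfl⟩ := Nat.exists_eq_add_of_le h
    nlinarith
  · obtain ⟨c, rfl⟩ := Nat.exists_eq_add_of_le h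
    nlinarith

theorem sum_mul_self_le {α : Type*} (G : Finset α) (g : α → ℕ) :
    (∑ v ∈ G, g v * g v) ≤ (∑ v ∈ G, g v) * (∑ v ∈ G, g v) := by
  calc (∑ v ∈ G, g v * g v) ≤ ∑ v ∈ G, g v * (∑ w ∈ G, g w) :=
        Finset.sum_le_sum fun v hv =>
          Nat.mul_le_mul_left _ (Finset.single_le_sum (fun _ _ => Nat.zero_le _) hv)
    _ = (∑ v ∈ G, g v) * (∑ w ∈ G, g w) := by rw [← Finset.sum_mul]

theorem sum_mul_self_add_two_le {α : Type*} [DecidableEq α] (G : Finset α) (g : α → ℕ)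
    (hg : ∀ v ∈ G, 1 ≤ g v) (hG : 2 ≤ G.card) :
    (∑ v ∈ G, g v * g v) + 2 ≤ (∑ v ∈ G, g v) * (∑ v ∈ G, g v) := by
  obtain ⟨v1, hv1, v2, hv2, hne⟩ := Finset.one_lt_card.mp hG
  have hS : ∀ v ∈ G, g v ≤ ∑ w ∈ G, g w := fun v hv =>
    Finset.single_le_sum (fun _ _ => Nat.zero_le _) hv
  have hpair : g v1 + g v2 ≤ ∑ w ∈ G, g w := by
    have hsub : ({v1, v2} : Finset α) ⊆ G := by
      intro x hx
      rcases Finset.mem_insert.mp hx with rfl | hx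
      · exact hv1
      · rw [Finset.mem_singleton] at hx; exact hx ▸ hv2
    have := Finset.sum_le_sum_of_subset (f := g) hsub
    rwa [Finset.sum_pair hne] at this
  have key : ∀ v ∈ G,
      g v * g v + ((if v = v1 then 1 else 0) + (if v = v2 then 1 else 0)) ≤
        g v * (∑ w ∈ G, g w) := by
    intro v hv
    by_cases h1 : v = v1
    · subst h1
      rw [if_pos rfl, if_neg hne]
      have h2 : g v * (g v + g v2) ≤ g v * (∑ w ∈ G, g w) := Nat.mul_le_mul_left _ hpair
      have h3 : 1 ≤ g v * g v2 := Nat.one_le_iff_ne_zero.mpr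
        (Nat.mul_ne_zero (by have := hg _ hv1; omega) (by have := hg _ hv2; omega))
      nlinarith
    · by_cases h2 : v = v2
      · subst h2
        rw [if_neg h1, if_pos rfl]
        have h2' : g v * (g v1 + g v) ≤ g v * (∑ w ∈ G, g w) := Nat.mul_le_mul_left _ hpair
        have h3 : 1 ≤ g v * g v1 := Nat.one_le_iff_ne_zero.mpr
          (Nat.mul_ne_zero (by have := hg _ hv2; omega) (by have := hg _ hv1; omega))
        nlinarith
      · rw [if_neg h1, if_neg h2]
        simpa using Nat.mul_le_mul_left (g v) (hS v hv)
  have hsum := Finset.sum_le_sum key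
  rw [Finset.sum_add_distrib, Finset.sum_add_distrib, Finset.sum_ite_eq' G v1 (fun _ => 1),
    Finset.sum_ite_eq' G v2 (fun _ => 1), if_pos hv1, if_pos hv2, ← Finset.sum_mul] at hsum
  omega

end Helpers

theorem partA {k W : Type*} [Field k] (hk2 : (2 : k) ≠ 0)
    [AddCommGroup W] [Module k W]
    {ι : Type*} [Fintype ι] [LinearOrder ι]
    (b : Module.Basis ι k W) (s : W →ₗ[k] W) (a : ι → k)
    (hb : ∀ x, s (b x) = a x • b x) (μ0 : k) :
    Module.finrank k ↥(Module.End.eigenspace (TensorProduct.map s s) μ0 ⊓ symSq k W)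
      = Nat.card {p : ι × ι // p.1 ≤ p.2 ∧ a p.1 * a p.2 = μ0} := by
  classical
  set b2 := b.tensorProduct b with hb2def
  have hb2e : ∀ p : ι × ι, b2 p = b p.1 ⊗ₜ[k] b p.2 := fun p =>
    Module.Basis.tensorProduct_apply b b p.1 p.2
  have hb2q : ∀ q : ι × ι, TensorProduct.map s s (b2 q) = (a q.1 * a q.2) • b2 q := by
    intro q
    rw [hb2e, TensorProduct.map_tmul, hb, hb, TensorProduct.smul_tmul_smul, ← hb2e]
  have hdiag : ∀ (z : W ⊗[k] W) (p : ι × ι),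
      b2.equivFun (TensorProduct.map s s z) p = (a p.1 * a p.2) * b2.equivFun z p := by
    intro z p
    conv_lhs => rw [← Module.Basis.sum_equivFun b2 z]
    rw [map_sum, map_sum]
    simp only [map_smul, hb2q, Finset.sum_apply, Pi.smul_apply, Module.Basis.equivFun_self,
      smul_eq_mul]
    rw [Finset.sum_eq_single p]
    · simp [mul_comm]
    · intro q _ hq
      simp [hq]
    · simp
  have hmemE : ∀ z : W ⊗[k] W, z ∈ Module.End.eigenspace (TensorProduct.map s s) μ0 ↔
      ∀ p : ι × ι, (a p.1 * a p.2) * b2.equivFun z p = μ0 * b2.equivFun z p := by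
    intro z
    rw [Module.End.mem_eigenspace_iff]
    constructor
    · intro h p
      rw [← hdiag z p, h, map_smul]
      simp [smul_eq_mul]
    · intro h
      apply b2.equivFun.injective
      funext p
      rw [hdiag, h p, map_smul]
      simp [smul_eq_mul]
  have hgen : ∀ p : ι × ι, b2 p + b2 (p.2, p.1) ∈ symSq k W := by
    intro p
    have h1 : (b p.1 + b p.2) ⊗ₜ[k] (b p.1 + b p.2) ∈ symSq k W :=
      Submodule.subset_span ⟨_, rfl⟩
    have h2 : (b p.1) ⊗ₜ[k] (b p.1) ∈ symSq k W := Submodule.subset_span ⟨_, rfl⟩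
    have h3 : (b p.2) ⊗ₜ[k] (b p.2) ∈ symSq k W := Submodule.subset_span ⟨_, rfl⟩
    have hid : b2 p + b2 (p.2, p.1) =
        (b p.1 + b p.2) ⊗ₜ[k] (b p.1 + b p.2) - (b p.1) ⊗ₜ[k] (b p.1)
          - (b p.2) ⊗ₜ[k] (b p.2) := by
      rw [hb2e, hb2e]
      simp only [TensorProduct.add_tmul, TensorProduct.tmul_add]
      abel
    rw [hid]
    exact Submodule.sub_mem _ (Submodule.sub_mem _ h1 h2) h3
  have hmemS : ∀ z : W ⊗[k] W, z ∈ symSq k W ↔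
      ∀ p : ι × ι, b2.equivFun z (p.2, p.1) = b2.equivFun z p := by
    intro z
    constructor
    · intro hz
      have : symSq k W ≤ ⨅ p : ι × ι, LinearMap.ker
          (((LinearMap.proj (p.2, p.1) : (ι × ι → k) →ₗ[k] k) - LinearMap.proj p) ∘ₗ
            (b2.equivFun : (W ⊗[k] W) ≃ₗ[k] (ι × ι → k)).toLinearMap) := by
        rw [symSq, Submodule.span_le]
        rintro _ ⟨v, rfl⟩
        simp only [SetLike.mem_coe, Submodule.mem_iInf, LinearMap.mem_ker, LinearMap.comp_apply,
          LinearMap.sub_apply, LinearMap.proj_apply, LinearEquiv.coe_coe]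
        intro p
        have h1 : ∀ q : ι × ι, b2.equivFun (v ⊗ₜ[k] v) q
            = b.repr v q.2 * b.repr v q.1 := by
          intro q
          rw [Module.Basis.equivFun_apply]
          exact Module.Basis.tensorProduct_repr_tmul_apply b b v v q.1 q.2
        rw [h1, h1]
        ring
      have h2 := this hz
      simp only [Submodule.mem_iInf, LinearMap.mem_ker, LinearMap.comp_apply,
        LinearMap.sub_apply, LinearMap.proj_apply, LinearEquiv.coe_coe] at h2
      intro p
      exact sub_eq_zero.mp (h2 p)
    · intro hsym
      have key : (2 : k) • z ∈ symSq k W := by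
        have e1 : z = ∑ p : ι × ι, b2.equivFun z p • b2 p := (Module.Basis.sum_equivFun b2 z).symm
        have e2 : ∑ p : ι × ι, b2.equivFun z p • b2 (p.2, p.1) = z := by
          conv_rhs => rw [e1]
          apply Fintype.sum_equiv (Equiv.prodComm ι ι)
          intro p
          show b2.equivFun z p • b2 (p.2, p.1) = b2.equivFun z (p.2, p.1) • b2 (p.2, p.1)
          rw [hsym p]
        have h1 : (∑ p : ι × ι, b2.equivFun z p • (b2 p + b2 (p.2, p.1))) = (2 : k) • z := by
          simp only [smul_add]
          rw [Finset.sum_add_distrib, ← e1, e2, two_smul]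
        rw [← h1]
        exact Submodule.sum_mem _ fun p _ => Submodule.smul_mem _ _ (hgen p)
      have : z = (2 : k)⁻¹ • ((2 : k) • z) := by
        rw [smul_smul, inv_mul_cancel₀ hk2, one_smul]
      rw [this]
      exact Submodule.smul_mem _ _ key
  set V := Module.End.eigenspace (TensorProduct.map s s) μ0 ⊓ symSq k W with hV
  set T := {p : ι × ι // p.1 ≤ p.2 ∧ a p.1 * a p.2 = μ0} with hT
  let Φ : ↥V →ₗ[k] (T → k) :=
    { toFun := fun z t => b2.equivFun z.1 t.1
      map_add' := by intros; funext t; simp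
      map_smul' := by intros; funext t; simp }
  have hΦapp : ∀ (z : ↥V) (t : T), Φ z t = b2.equivFun z.1 t.1 := fun _ _ => rfl
  have hinj : Function.Injective Φ := by
    rw [injective_iff_map_eq_zero]
    intro z hz
    have hzE := (hmemE z.1).mp z.2.1
    have hzS := (hmemS z.1).mp z.2.2
    have hall : ∀ p : ι × ι, b2.equivFun z.1 p = 0 := by
      intro p
      by_cases hS : a p.1 * a p.2 = μ0
      · by_cases hle : p.1 ≤ p.2
        · have := congrFun hz ⟨p, hle, hS⟩
          simpa [hΦapp] using this
        · have hle' : p.2 ≤ p.1 := le_of_not_ge hle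
          have hS' : a p.2 * a p.1 = μ0 := by rw [mul_comm]; exact hS
          have h0 := congrFun hz ⟨(p.2, p.1), hle', hS'⟩
          rw [← hzS p]
          simpa [hΦapp] using h0
      · have h := hzE p
        have h2 : (a p.1 * a p.2 - μ0) * b2.equivFun z.1 p = 0 := by
          rw [sub_mul, h, sub_self]
        rcases mul_eq_zero.mp h2 with h' | h'
        · exact absurd (sub_eq_zero.mp h') hS
        · exact h'
    have hz1 : z.1 = 0 := by
      apply b2.equivFun.injective
      funext p
      simpa using hall p
    exact Subtype.ext hz1
  have hsurj : Function.Surjective Φ := by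
    intro f
    set c : ι × ι → k := fun p =>
      if h : p.1 ≤ p.2 ∧ a p.1 * a p.2 = μ0 then f ⟨p, h⟩
      else if h' : p.2 ≤ p.1 ∧ a p.2 * a p.1 = μ0 then f ⟨(p.2, p.1), h'⟩ else 0 with hc
    set z := b2.equivFun.symm c with hz
    have hcz : b2.equivFun z = c := b2.equivFun.apply_symm_apply c
    have hzsupp : ∀ p : ι × ι, a p.1 * a p.2 ≠ μ0 → c p = 0 := by
      intro p hp
      simp only [hc]
      rw [dif_neg, dif_neg]
      · rintro ⟨_, h2⟩; exact hp (by rw [mul_comm]; exact h2)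
      · rintro ⟨_, h2⟩; exact hp h2
    have hcsym : ∀ p : ι × ι, c (p.2, p.1) = c p := by
      intro p
      by_cases h1 : p.1 ≤ p.2 ∧ a p.1 * a p.2 = μ0
      · by_cases h2 : p.2 ≤ p.1 ∧ a p.2 * a p.1 = μ0
        · have hpp : p.1 = p.2 := le_antisymm h1.1 h2.1
          have : (p.2, p.1) = p := by
            cases p with
            | mk x y => simp only [Prod.mk.injEq]; exact ⟨hpp.symm, hpp⟩
          rw [this]
        · simp only [hc]
          rw [dif_neg (by simpa using h2), dif_pos (by simpa using h1), dif_pos h1]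
      · by_cases h2 : p.2 ≤ p.1 ∧ a p.2 * a p.1 = μ0
        · simp only [hc]
          rw [dif_pos (by simpa using h2), dif_neg h1, dif_pos h2]
        · simp only [hc]
          rw [dif_neg (by simpa using h2), dif_neg (by simpa using h1),
            dif_neg h1, dif_neg h2]
    have hzV : z ∈ V := by
      refine Submodule.mem_inf.mpr ⟨?_, ?_⟩
      · rw [hmemE]
        intro p
        rw [hcz]
        by_cases hS : a p.1 * a p.2 = μ0
        · rw [hS]
        · rw [hzsupp p hS, mul_zero, mul_zero]
      · rw [hmemS]
        intro p
        rw [hcz]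
        exact hcsym p
    refine ⟨⟨z, hzV⟩, ?_⟩
    funext t
    rw [hΦapp]
    show b2.equivFun z t.1 = f t
    rw [hcz]
    simp only [hc]
    rw [dif_pos t.2]
  have e : ↥V ≃ₗ[k] (T → k) := LinearEquiv.ofBijective Φ ⟨hinj, hsurj⟩
  rw [LinearEquiv.finrank_eq e, Module.finrank_pi, Nat.card_eq_fintype_card]


set_option maxHeartbeats 2000000 in
/-- Let `s = diag(μ₁·I_{n₁},…,μ_m·I_{n_m}, μ_m^{-1}·I_{n_m},…,μ₁^{-1}·I_{n₁})`
be a noncentral element of `Sp_{2ℓ}(k)` (`ℓ ≥ 2`, `k` algebraically closed of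
characteristic `≠ 2`), with `μ_i ≠ μ_j^{±1}` for `i < j` and `Σ n_i = ℓ`.  Then every
eigenspace of `s` on `Sym²(k^{2ℓ}) = L(2ω₁)` has dimension at most `2ℓ² − 3ℓ + 4`, and
equality for an eigenvalue `μ₀` with `μ₀ = μ₀^{-1}` forces (for `ℓ ≥ 3`)
`s = ±diag(1,…,1,−1,−1,1,…,1)` up to conjugation, with eigenvalue `1`. -/
theorem stmt11 {k : Type*} [Field k] [IsAlgClosed k] (hk2 : (2 : k) ≠ 0)
    {W : Type*} [AddCommGroup W] [Module k W] [FiniteDimensional k W]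
    (ℓ : ℕ) (hl : 2 ≤ ℓ) (hW : Module.finrank k W = 2 * ℓ)
    (B : LinearMap.BilinForm k W) (hBnd : B.Nondegenerate)
    (hBalt : ∀ v w : W, B v w = -B w v)
    (s : W →ₗ[k] W) (hs : ∀ v w, B (s v) (s w) = B v w)
    (hnoncentral : ∀ c : k, s ≠ c • LinearMap.id)
    (m : ℕ) (μ : Fin m → k) (n : Fin m → ℕ)
    (hμ : ∀ i j : Fin m, i < j → μ i ≠ μ j ∧ μ i ≠ (μ j)⁻¹)
    (hn : ∀ i, 1 ≤ n i) (hsum : ∑ i, n i = ℓ)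
    (b : Module.Basis (Fin (2 * ℓ)) k W) (a : Fin (2 * ℓ) → k)
    (hb : ∀ x, s (b x) = a x • b x)
    (hmult : Finset.univ.val.map a =
      ∑ i : Fin m, ((n i) • ({μ i} : Multiset k) + (n i) • ({(μ i)⁻¹} : Multiset k))) :
    ∀ μ0 : k,
      Module.finrank k
        ↥(Module.End.eigenspace (TensorProduct.map s s) μ0 ⊓ symSq k W) ≤
        2 * ℓ ^ 2 - 3 * ℓ + 4 ∧
      (3 ≤ ℓ → μ0 = μ0⁻¹ →
        Module.finrank k
          ↥(Module.End.eigenspace (TensorProduct.map s s) μ0 ⊓ symSq k W) =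
          2 * ℓ ^ 2 - 3 * ℓ + 4 →
        μ0 = 1 ∧ ∃ ε : k, (ε = 1 ∨ ε = -1) ∧
          Finset.univ.val.map a =
            (2 * ℓ - 2) • ({ε} : Multiset k) + 2 • ({-ε} : Multiset k)) := by
  classical
  obtain ⟨j, rfl⟩ : ∃ j, ℓ = j + 2 := ⟨ℓ - 2, by omega⟩
  intro μ0
  -- eigenvalues are nonzero
  have hsinj : Function.Injective s := by
    rw [← LinearMap.ker_eq_bot, LinearMap.ker_eq_bot']
    intro v hv
    apply hBnd.1
    intro w
    rw [← hs v w, hv]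
    simp
  have ha0 : ∀ x, a x ≠ 0 := by
    intro x hx
    have h1 : s (b x) = s 0 := by rw [hb, hx, zero_smul, map_zero]
    exact b.ne_zero x (hsinj h1)
  -- combinatorial set-up
  obtain ⟨mm, hmm⟩ : ∃ f : k → ℕ, f = fun v => Multiset.count v (Finset.univ.val.map a) :=
    ⟨_, rfl⟩
  obtain ⟨F, hF⟩ : ∃ G : Finset k, G = Finset.univ.image a := ⟨_, rfl⟩
  obtain ⟨Tfin, hTfin⟩ : ∃ G : Finset (Fin (2 * (j + 2)) × Fin (2 * (j + 2))),
      G = Finset.univ.filter (fun p => p.1 ≤ p.2 ∧ a p.1 * a p.2 = μ0) := ⟨_, rfl⟩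
  obtain ⟨Sfin, hSfin⟩ : ∃ G : Finset (Fin (2 * (j + 2)) × Fin (2 * (j + 2))),
      G = Finset.univ.filter (fun p => a p.1 * a p.2 = μ0) := ⟨_, rfl⟩
  obtain ⟨Dfin, hDfin⟩ : ∃ G : Finset (Fin (2 * (j + 2))),
      G = Finset.univ.filter (fun x => a x * a x = μ0) := ⟨_, rfl⟩
  have hmemF : ∀ x, a x ∈ F := fun x => by
    rw [hF]; exact Finset.mem_image_of_mem a (Finset.mem_univ x)
  have hFim : ∀ v ∈ F, ∃ x, a x = v := by
    intro v hv
    rw [hF] at hv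
    obtain ⟨x, _, h⟩ := Finset.mem_image.mp hv
    exact ⟨x, h⟩
  have hrank : Module.finrank k
      ↥(Module.End.eigenspace (TensorProduct.map s s) μ0 ⊓ symSq k W) = Tfin.card := by
    rw [partA hk2 b s a hb μ0, Nat.card_eq_fintype_card, hTfin]
    convert Fintype.card_subtype _
  -- 2 * Tfin.card = Sfin.card + Dfin.card
  have hTT : Sfin.card + Dfin.card = 2 * Tfin.card := by
    obtain ⟨T2, hT2⟩ : ∃ G : Finset (Fin (2 * (j + 2)) × Fin (2 * (j + 2))),
        G = Finset.univ.filter (fun p => p.2 ≤ p.1 ∧ a p.1 * a p.2 = μ0) := ⟨_, rfl⟩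
    have hunion : Tfin ∪ T2 = Sfin := by
      ext p
      simp only [hTfin, hT2, hSfin, Finset.mem_union, Finset.mem_filter, Finset.mem_univ,
        true_and]
      constructor
      · rintro (⟨_, h⟩ | ⟨_, h⟩) <;> exact h
      · intro h
        rcases le_total p.1 p.2 with hle | hle
        · exact Or.inl ⟨hle, h⟩
        · exact Or.inr ⟨hle, h⟩
    have hcinter : (Tfin ∩ T2).card = Dfin.card := by
      apply Finset.card_bij (fun p _ => p.1)
      · intro p hp
        simp only [hTfin, hT2, Finset.mem_inter, Finset.mem_filter, Finset.mem_univ,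
          true_and] at hp
        have hpe : p.1 = p.2 := le_antisymm hp.1.1 hp.2.1
        simp only [hDfin, Finset.mem_filter, Finset.mem_univ, true_and]
        rw [← hpe] at hp
        exact hp.1.2
      · intro p hp q hq h
        simp only [hTfin, hT2, Finset.mem_inter, Finset.mem_filter, Finset.mem_univ,
          true_and] at hp hq
        have hpe : p.1 = p.2 := le_antisymm hp.1.1 hp.2.1
        have hqe : q.1 = q.2 := le_antisymm hq.1.1 hq.2.1
        exact Prod.ext h (by rw [← hpe, ← hqe, h])
      · intro x hx
        simp only [hDfin, Finset.mem_filter, Finset.mem_univ, true_and] at hx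
        refine ⟨(x, x), ?_, rfl⟩
        simp only [hTfin, hT2, Finset.mem_inter, Finset.mem_filter, Finset.mem_univ,
          true_and]
        exact ⟨⟨le_refl x, hx⟩, ⟨le_refl x, hx⟩⟩
    have hcT2 : T2.card = Tfin.card := by
      apply Finset.card_bij (fun p _ => (p.2, p.1))
      · intro p hp
        simp only [hT2, Finset.mem_filter, Finset.mem_univ, true_and] at hp
        simp only [hTfin, Finset.mem_filter, Finset.mem_univ, true_and]
        exact ⟨hp.1, by rw [mul_comm]; exact hp.2⟩
      · intro p hp q hq h
        have h1 : p.2 = q.2 := congrArg Prod.fst h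
        have h2 : p.1 = q.1 := congrArg Prod.snd h
        exact Prod.ext h2 h1
      · intro q hq
        simp only [hTfin, Finset.mem_filter, Finset.mem_univ, true_and] at hq
        refine ⟨(q.2, q.1), ?_, rfl⟩
        simp only [hT2, Finset.mem_filter, Finset.mem_univ, true_and]
        exact ⟨hq.1, by rw [mul_comm]; exact hq.2⟩
    have hu := Finset.card_union_add_card_inter Tfin T2
    rw [hunion, hcinter, hcT2] at hu
    omega
  -- multiplicity facts
  have hmmcard : ∀ v, mm v
      = (Finset.univ.filter (fun x : Fin (2 * (j + 2)) => a x = v)).card := by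
    intro v
    rw [hmm]
    simp only []
    rw [Multiset.count_map]
    have h1 : Multiset.filter (fun x => v = a x) Finset.univ.val
        = Multiset.filter (fun x => a x = v) Finset.univ.val :=
      Multiset.filter_congr (fun x _ => by constructor <;> (intro h; exact h.symm))
    rw [h1, ← Finset.filter_val]
    rfl
  have hmform : ∀ v, mm v = ∑ i, (n i * (if v = μ i then 1 else 0)
      + n i * (if v = (μ i)⁻¹ then 1 else 0)) := by
    intro v
    rw [hmm]
    simp only []
    rw [hmult, Multiset.count_sum']
    apply Finset.sum_congr rfl
    intro i _
    rw [Multiset.count_add, Multiset.count_nsmul, Multiset.count_nsmul,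
      Multiset.count_singleton, Multiset.count_singleton]
  have hmminv : ∀ v : k, mm v⁻¹ = mm v := by
    intro v
    rw [hmform, hmform]
    apply Finset.sum_congr rfl
    intro i _
    have e1 : (v⁻¹ = μ i) = (v = (μ i)⁻¹) :=
      propext ⟨fun h => by rw [← h, inv_inv], fun h => by rw [h, inv_inv]⟩
    have e2 : (v⁻¹ = (μ i)⁻¹) = (v = μ i) :=
      propext ⟨fun h => inv_injective h, fun h => by rw [h]⟩
    rw [e1, e2]
    exact add_comm _ _
  have heven : ∀ v : k, v = v⁻¹ → ∃ r, mm v = 2 * r := by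
    intro v hv
    refine ⟨∑ i, n i * (if v = μ i then 1 else 0), ?_⟩
    rw [hmform, Finset.mul_sum]
    apply Finset.sum_congr rfl
    intro i _
    have e1 : (v = (μ i)⁻¹) = (v = μ i) := propext
      ⟨fun h => by rw [hv, h, inv_inv], fun h => by rw [← h, ← hv]⟩
    rw [e1]
    ring
  have hFmm : ∀ v : k, v ∈ F ↔ 1 ≤ mm v := by
    intro v
    rw [hmmcard v, hF]
    constructor
    · intro hv
      obtain ⟨x, _, rfl⟩ := Finset.mem_image.mp hv
      exact Finset.card_pos.mpr ⟨x, Finset.mem_filter.mpr ⟨Finset.mem_univ x, rfl⟩⟩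
    · intro hv
      obtain ⟨x, hx⟩ := Finset.card_pos.mp hv
      rw [Finset.mem_filter] at hx
      exact Finset.mem_image.mpr ⟨x, Finset.mem_univ x, hx.2⟩
  have hsum_mm : ∑ v ∈ F, mm v = 2 * (j + 2) := by
    have hfib := Finset.card_eq_sum_card_fiberwise
      (f := a) (s := (Finset.univ : Finset (Fin (2 * (j + 2))))) (t := F)
      (fun x _ => hmemF x)
    rw [Finset.card_univ, Fintype.card_fin] at hfib
    calc ∑ v ∈ F, mm v
        = ∑ v ∈ F, (Finset.univ.filter (fun x : Fin (2 * (j + 2)) => a x = v)).card :=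
          Finset.sum_congr rfl (fun v _ => hmmcard v)
      _ = 2 * (j + 2) := hfib.symm
  have hcard2 : 2 ≤ F.card := by
    by_contra hcon
    push_neg at hcon
    have hne : F.Nonempty := ⟨a ⟨0, by omega⟩, hmemF _⟩
    have h1 : F.card = 1 := by have := Finset.card_pos.mpr hne; omega
    obtain ⟨c, hc⟩ := Finset.card_eq_one.mp h1
    apply hnoncentral c
    apply Module.Basis.ext b
    intro x
    have hax : a x = c := by
      have hm : a x ∈ F := hmemF x
      rw [hc] at hm
      exact Finset.mem_singleton.mp hm
    rw [hb, hax]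
    simp
  have hmle : ∀ v ∈ F, mm v + 2 ≤ 2 * (j + 2) := by
    intro v hvF
    by_cases hvv : v = v⁻¹
    · obtain ⟨w, hwF, hwv⟩ := Finset.exists_mem_ne (lt_of_lt_of_le one_lt_two hcard2) v
      by_cases hww : w = w⁻¹
      · obtain ⟨r, hr⟩ := heven w hww
        have hw1 : 1 ≤ mm w := (hFmm w).mp hwF
        have hpair : mm v + mm w ≤ 2 * (j + 2) := by
          have hsub : ({v, w} : Finset k) ⊆ F := by
            intro x hx
            rcases Finset.mem_insert.mp hx with rfl | hx
            · exact hvF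
            · rw [Finset.mem_singleton] at hx; exact hx ▸ hwF
          have h2 := Finset.sum_le_sum_of_subset (f := mm) hsub
          rw [Finset.sum_pair (Ne.symm hwv), hsum_mm] at h2
          exact h2
        omega
      · have hwinvF : w⁻¹ ∈ F := (hFmm _).mpr (by rw [hmminv]; exact (hFmm w).mp hwF)
        have h1 : v ≠ w := Ne.symm hwv
        have h2 : v ≠ w⁻¹ := by
          intro h
          have h3 : v⁻¹ = w := by rw [h, inv_inv]
          exact h1 (hvv.trans h3)
        have hsub : ({v, w, w⁻¹} : Finset k) ⊆ F := by
          intro x hx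
          rcases Finset.mem_insert.mp hx with rfl | hx
          · exact hvF
          rcases Finset.mem_insert.mp hx with rfl | hx
          · exact hwF
          rw [Finset.mem_singleton] at hx
          exact hx ▸ hwinvF
        have hsum3 : mm v + (mm w + mm w⁻¹) ≤ 2 * (j + 2) := by
          have h3 := Finset.sum_le_sum_of_subset (f := mm) hsub
          rw [Finset.sum_insert (by simp [h1, h2]), Finset.sum_pair hww, hsum_mm] at h3
          exact h3
        have h4 := (hFmm w).mp hwF
        have h5 := (hFmm w⁻¹).mp hwinvF
        omega
    · have hvinvF : v⁻¹ ∈ F := (hFmm _).mpr (by rw [hmminv]; exact (hFmm v).mp hvF)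
      have hpair : mm v + mm v⁻¹ ≤ 2 * (j + 2) := by
        have hsub : ({v, v⁻¹} : Finset k) ⊆ F := by
          intro x hx
          rcases Finset.mem_insert.mp hx with rfl | hx
          · exact hvF
          · rw [Finset.mem_singleton] at hx; exact hx ▸ hvinvF
        have h2 := Finset.sum_le_sum_of_subset (f := mm) hsub
        rw [Finset.sum_pair hvv, hsum_mm] at h2
        exact h2
      have h3 : mm v⁻¹ = mm v := hmminv v
      omega
  -- Sfin.card as a sum over values
  have hP : Sfin.card = ∑ v ∈ F, mm v * mm (μ0 * v⁻¹) := by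
    have h1 : Sfin.card = ∑ x : Fin (2 * (j + 2)),
        (Finset.univ.filter (fun y => a x * a y = μ0)).card := by
      rw [hSfin, Finset.card_filter, Fintype.sum_prod_type]
      apply Finset.sum_congr rfl
      intro x _
      rw [Finset.card_filter]
    have h2 : ∀ x : Fin (2 * (j + 2)),
        (Finset.univ.filter (fun y => a x * a y = μ0)).card = mm (μ0 * (a x)⁻¹) := by
      intro x
      rw [hmmcard]
      congr 1
      apply Finset.filter_congr
      intro y _
      constructor
      · intro h
        rw [← h, mul_comm (a x) (a y), mul_assoc, mul_inv_cancel₀ (ha0 x), mul_one]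
      · intro h
        rw [h, ← mul_assoc, mul_comm (a x) μ0, mul_assoc, mul_inv_cancel₀ (ha0 x), mul_one]
    rw [h1, Finset.sum_congr rfl (fun x _ => h2 x),
      Finset.sum_comp (fun v => mm (μ0 * v⁻¹)) a, ← hF]
    apply Finset.sum_congr rfl
    intro v _
    rw [nsmul_eq_mul, Nat.cast_id, ← hmmcard]
  -- Cauchy–Schwarz style bound
  have hCS : μ0 ≠ 0 → Sfin.card ≤ ∑ v ∈ F, mm v * mm v := by
    intro hμ0
    have h1 : 2 * Sfin.card ≤ (∑ v ∈ F, mm v * mm v)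
        + ∑ v ∈ F, mm (μ0 * v⁻¹) * mm (μ0 * v⁻¹) := by
      rw [hP, Finset.mul_sum, ← Finset.sum_add_distrib]
      exact Finset.sum_le_sum fun v _ => amgmNat _ _
    have hinjσ : ∀ x ∈ F, ∀ y ∈ F, μ0 * x⁻¹ = μ0 * y⁻¹ → x = y := by
      intro x _ y _ h
      exact inv_injective (mul_left_cancel₀ hμ0 h)
    have h2 : ∑ v ∈ F, mm (μ0 * v⁻¹) * mm (μ0 * v⁻¹)
        = ∑ w ∈ F.image (fun v => μ0 * v⁻¹), mm w * mm w := by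
      rw [Finset.sum_image hinjσ]
    have h3 : ∑ w ∈ F.image (fun v => μ0 * v⁻¹), mm w * mm w ≤ ∑ w ∈ F, mm w * mm w := by
      have h4 : ∑ w ∈ F.image (fun v => μ0 * v⁻¹), mm w * mm w
          = ∑ w ∈ (F.image (fun v => μ0 * v⁻¹)) ∩ F, mm w * mm w := by
        apply (Finset.sum_subset Finset.inter_subset_left ?_).symm
        intro x hx hx2
        have hxF : x ∉ F := fun hFx => hx2 (Finset.mem_inter.mpr ⟨hx, hFx⟩)
        have hx0 : mm x = 0 := by
          by_contra h'
          exact hxF ((hFmm x).mpr (Nat.one_le_iff_ne_zero.mpr h'))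
        simp [hx0]
      rw [h4]
      exact Finset.sum_le_sum_of_subset Finset.inter_subset_right
    rw [h2] at h1
    have h5 : 2 * Sfin.card ≤ 2 * (∑ v ∈ F, mm v * mm v) := by
      calc 2 * Sfin.card ≤ (∑ v ∈ F, mm v * mm v)
            + ∑ w ∈ F.image (fun v => μ0 * v⁻¹), mm w * mm w := h1
        _ ≤ (∑ v ∈ F, mm v * mm v) + ∑ w ∈ F, mm w * mm w :=
            Nat.add_le_add_left h3 _
        _ = 2 * (∑ v ∈ F, mm v * mm v) := by ring
    exact Nat.le_of_mul_le_mul_left h5 (by norm_num)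
  -- bound on the sum of squares
  have hsqb : ∑ v ∈ F, mm v * mm v ≤ (2 * j + 2) * (2 * j + 2) + 4 := by
    by_cases hbig : ∃ v0 ∈ F, 2 ≤ mm v0
    · obtain ⟨v0, hv0F, hv0⟩ := hbig
      have hsplit : mm v0 + ∑ v ∈ F.erase v0, mm v = 2 * (j + 2) := by
        rw [Finset.add_sum_erase _ _ hv0F, hsum_mm]
      have hsq : mm v0 * mm v0 + ∑ v ∈ F.erase v0, mm v * mm v
          = ∑ v ∈ F, mm v * mm v :=
        Finset.add_sum_erase _ (fun v => mm v * mm v) hv0F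
      have hR := sum_mul_self_le (F.erase v0) mm
      have hM := hmle v0 hv0F
      zify at hsplit hsq hR hM hv0 ⊢
      nlinarith only [hsplit, hsq, hR, hM, hv0]
    · push_neg at hbig
      have h1 : ∑ v ∈ F, mm v * mm v ≤ ∑ v ∈ F, mm v := by
        apply Finset.sum_le_sum
        intro v hv
        calc mm v * mm v ≤ mm v * 1 := Nat.mul_le_mul_left _ (Nat.lt_succ_iff.mp (hbig v hv))
          _ = mm v := mul_one _
      rw [hsum_mm] at h1
      have h4 : 2 * j + 2 ≤ (2 * j + 2) * (2 * j + 2) :=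
        Nat.le_mul_of_pos_left _ (by omega)
      generalize (2 * j + 2) * (2 * j + 2) = q at h4 ⊢
      omega
  have hD2 : Dfin.card ≤ 2 * (j + 2) := by
    rw [hDfin]
    refine le_trans (Finset.card_filter_le _ _) ?_
    simp
  have hval : 2 * (2 * (j + 2) ^ 2 - 3 * (j + 2) + 4)
      = (2 * j + 2) * (2 * j + 2) + 4 + 2 * (j + 2) := by
    have h1 : (j + 2) ^ 2 = j * j + 4 * j + 4 := by ring
    have h2 : (2 * j + 2) * (2 * j + 2) = 4 * (j * j) + 8 * j + 4 := by ring
    rw [h1, h2]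
    generalize j * j = q
    omega
  constructor
  · -- the upper bound
    rw [hrank]
    by_cases hμ00 : μ0 = 0
    · have hTe : Tfin = ∅ := by
        rw [hTfin]
        apply Finset.filter_eq_empty_iff.mpr
        intro p _
        rintro ⟨_, hpe⟩
        exact mul_ne_zero (ha0 p.1) (ha0 p.2) (hμ00 ▸ hpe)
      rw [hTe]
      simp
    · have h1 := hCS hμ00
      omega
  · -- the equality case
    intro hl3 hμinv heq
    by_cases hμ00 : μ0 = 0
    · exfalso
      have hTe : Tfin = ∅ := by
        rw [hTfin]
        apply Finset.filter_eq_empty_iff.mpr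
        intro p _
        rintro ⟨_, hpe⟩
        exact mul_ne_zero (ha0 p.1) (ha0 p.2) (hμ00 ▸ hpe)
      rw [hrank, hTe, Finset.card_empty] at heq
      have h1 : (j + 2) ^ 2 = j * j + 4 * j + 4 := by ring
      rw [h1] at heq
      generalize j * j = q at heq
      omega
    have hT : Tfin.card = 2 * (j + 2) ^ 2 - 3 * (j + 2) + 4 := by rw [← hrank]; exact heq
    have h1 := hCS hμ00
    have hSD : Sfin.card = (2 * j + 2) * (2 * j + 2) + 4 ∧ Dfin.card = 2 * (j + 2) := by
      constructor <;> omega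
    -- every eigenvalue squares to μ0
    have hDall : ∀ x, a x * a x = μ0 := by
      have hDu : Dfin = Finset.univ := by
        apply Finset.eq_univ_of_card
        rw [hSD.2, Fintype.card_fin]
      intro x
      have hx : x ∈ Dfin := hDu ▸ Finset.mem_univ x
      rw [hDfin, Finset.mem_filter] at hx
      exact hx.2
    have hvv : ∀ v ∈ F, v * v = μ0 := by
      intro v hv
      obtain ⟨x, rfl⟩ := hFim v hv
      exact hDall x
    have hFne0 : ∀ v ∈ F, v ≠ 0 := by
      intro v hv
      obtain ⟨x, rfl⟩ := hFim v hv
      exact ha0 x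
    have hSfix : ∑ v ∈ F, mm v * mm v = (2 * j + 2) * (2 * j + 2) + 4 := by
      have hPfix : Sfin.card = ∑ v ∈ F, mm v * mm v := by
        rw [hP]
        apply Finset.sum_congr rfl
        intro v hv
        have hfx : μ0 * v⁻¹ = v := by
          rw [← hvv v hv, mul_assoc, mul_inv_cancel₀ (hFne0 v hv), mul_one]
        rw [hfx]
      rw [← hPfix, hSD.1]
    -- two values with multiplicities 2j+2 and 2
    have hbig : ∃ v0 ∈ F, 2 ≤ mm v0 := by
      by_contra hcon
      push_neg at hcon
      have h2 : ∑ v ∈ F, mm v * mm v ≤ ∑ v ∈ F, mm v := by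
        apply Finset.sum_le_sum
        intro v hv
        calc mm v * mm v ≤ mm v * 1 := Nat.mul_le_mul_left _ (Nat.lt_succ_iff.mp (hcon v hv))
          _ = mm v := mul_one _
      rw [hsum_mm, hSfix] at h2
      have h4 : 2 * j + 2 ≤ (2 * j + 2) * (2 * j + 2) :=
        Nat.le_mul_of_pos_left _ (by omega)
      generalize (2 * j + 2) * (2 * j + 2) = q at h2 h4
      omega
    obtain ⟨v0, hv0F, hv02⟩ := hbig
    have herase1 : (F.erase v0).card = 1 := by
      have hge : 1 ≤ (F.erase v0).card := by
        rw [Finset.card_erase_of_mem hv0F]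
        omega
      by_contra hcon
      have hge2 : 2 ≤ (F.erase v0).card := by omega
      have hstrict := sum_mul_self_add_two_le (F.erase v0) mm
        (fun v hv => (hFmm v).mp (Finset.mem_of_mem_erase hv)) hge2
      have hsplit : mm v0 + ∑ v ∈ F.erase v0, mm v = 2 * (j + 2) := by
        rw [Finset.add_sum_erase _ _ hv0F, hsum_mm]
      have hsq : mm v0 * mm v0 + ∑ v ∈ F.erase v0, mm v * mm v
          = ∑ v ∈ F, mm v * mm v :=
        Finset.add_sum_erase _ (fun v => mm v * mm v) hv0F
      have hM := hmle v0 hv0F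
      rw [hSfix] at hsq
      zify at hsplit hsq hstrict hM hv02
      nlinarith only [hsplit, hsq, hstrict, hM, hv02]
    obtain ⟨v1, hv1⟩ := Finset.card_eq_one.mp herase1
    have hv1mem : v1 ∈ F.erase v0 := hv1 ▸ Finset.mem_singleton_self v1
    have hv1F : v1 ∈ F := Finset.mem_of_mem_erase hv1mem
    have hne01 : v0 ≠ v1 := fun h => (Finset.mem_erase.mp hv1mem).1 h.symm
    have hFeq : F = {v0, v1} := by
      rw [← Finset.insert_erase hv0F, hv1]
    have hsum2 : mm v0 + mm v1 = 2 * (j + 2) := by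
      rw [← hsum_mm, hFeq, Finset.sum_pair hne01]
    have hsq2 : mm v0 * mm v0 + mm v1 * mm v1 = (2 * j + 2) * (2 * j + 2) + 4 := by
      rw [← hSfix, hFeq, Finset.sum_pair hne01]
    have hsol : (mm v0 = 2 * j + 2 ∧ mm v1 = 2) ∨ (mm v0 = 2 ∧ mm v1 = 2 * j + 2) := by
      have hz : ((mm v0 : ℤ) - 2) * ((mm v1 : ℤ) - 2) = 0 := by
        have e1 : (mm v0 : ℤ) + mm v1 = 2 * j + 4 := by exact_mod_cast hsum2
        have e2 : (mm v0 : ℤ) * mm v0 + mm v1 * mm v1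
            = (2 * j + 2) * (2 * j + 2) + 4 := by exact_mod_cast hsq2
        nlinarith only [e1, e2]
      rcases mul_eq_zero.mp hz with h | h
      · have h0 : mm v0 = 2 := by
          have := sub_eq_zero.mp h
          exact_mod_cast this
        right
        exact ⟨h0, by omega⟩
      · have h0 : mm v1 = 2 := by
          have := sub_eq_zero.mp h
          exact_mod_cast this
        left
        exact ⟨by omega, h0⟩
    obtain ⟨ε, δ, hεF, hδF, hεδ, hFed, hmε, hmδ⟩ :
        ∃ ε δ : k, ε ∈ F ∧ δ ∈ F ∧ ε ≠ δ ∧ F = {ε, δ} ∧ mm ε = 2 * j + 2 ∧ mm δ = 2 := by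
      rcases hsol with ⟨h1, h2⟩ | ⟨h1, h2⟩
      · exact ⟨v0, v1, hv0F, hv1F, hne01, hFeq, h1, h2⟩
      · exact ⟨v1, v0, hv1F, hv0F, hne01.symm, by rw [hFeq]; exact Finset.pair_comm v0 v1,
          h2, h1⟩
    have hεinv : ε⁻¹ = ε := by
      have h2 : ε⁻¹ ∈ F := (hFmm _).mpr (by rw [hmminv, hmε]; omega)
      rw [hFed] at h2
      rcases Finset.mem_insert.mp h2 with h | h
      · exact h
      · exfalso
        rw [Finset.mem_singleton] at h
        have h3 : mm δ = mm ε := by rw [← h, hmminv]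
        rw [hmε, hmδ] at h3
        omega
    have hμ01 : μ0 = 1 := by
      calc μ0 = ε * ε := (hvv ε hεF).symm
        _ = ε * ε⁻¹ := by rw [hεinv]
        _ = 1 := mul_inv_cancel₀ (hFne0 ε hεF)
    refine ⟨hμ01, ε, ?_, ?_⟩
    · exact mul_self_eq_one_iff.mp (by rw [hvv ε hεF, hμ01])
    · have hε1 : ε = 1 ∨ ε = -1 := mul_self_eq_one_iff.mp (by rw [hvv ε hεF, hμ01])
      have hδ1 : δ = 1 ∨ δ = -1 := mul_self_eq_one_iff.mp (by rw [hvv δ hδF, hμ01])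
      have hδε : δ = -ε := by
        rcases hε1 with rfl | rfl <;> rcases hδ1 with rfl | rfl
        · exact absurd rfl (Ne.symm hεδ)
        · rfl
        · rw [neg_neg]
        · exact absurd rfl (Ne.symm hεδ)
      apply Multiset.ext.mpr
      intro w
      have hcw : Multiset.count w (Finset.univ.val.map a) = mm w := by rw [hmm]
      rw [hcw, Multiset.count_add, Multiset.count_nsmul, Multiset.count_nsmul,
        Multiset.count_singleton, Multiset.count_singleton]
      have h2l2 : 2 * (j + 2) - 2 = 2 * j + 2 := by omega
      rw [h2l2, ← hδε]
      by_cases h1 : w = ε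
      · subst h1
        rw [if_pos rfl, if_neg (fun h => hεδ h)]
        rw [hmε]
        ring
      · by_cases h2 : w = δ
        · subst h2
          rw [if_neg h1, if_pos rfl, hmδ]
          ring
        · have hw : w ∉ F := by
            rw [hFed]
            simp [h1, h2]
          have hw0 : mm w = 0 := by
            by_contra h'
            exact hw ((hFmm w).mpr (Nat.one_le_iff_ne_zero.mpr h'))
          rw [hw0, if_neg h1, if_neg h2]
          ring
end
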